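/- arXiv:1701.04223 — 7 statements merged into one kernel-verified Lean document; each statement's English description precedes it below -/
import Mathlib

section
/- Let X₁ → X₂ ⊕ Y₂ → X₃ → X₁⟦1⟧ be a distinguished triangle in C whose first map has components f₁ : X₁ → X₂ and g₁ : X₁ → Y₂, and whose second map has components f₂ : X₂ → X₃ and g₂ : Y₂ → X₃. If g₁ = 0, then g₂ is a split monomorphism; more precisely, there exists g₂' : X₃ → Y₂ such that g₂' ∘ g₂ = 1_{Y₂} and g₂' ∘ f₂ = 0. -/
open CategoryTheory CategoryTheory.Limits CategoryTheory.Pretriangulated ZeroObject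

variable {C : Type*} [Category C] [Preadditive C] [HasZeroObject C] [HasBinaryBiproducts C]
  [HasShift C ℤ] [∀ n : ℤ, (shiftFunctor C n).Additive] [Pretriangulated C]

/-- The direct sum of two triangles: the triangle on the biproducts of the corresponding
objects, with the componentwise maps. -/
noncomputable def triangleSum (T T' : Triangle C) : Triangle C :=
  Triangle.mk (biprod.map T.mor₁ T'.mor₁) (biprod.map T.mor₂ T'.mor₂)
    (biprod.desc (T.mor₃ ≫ (biprod.inl : T.obj₁ ⟶ T.obj₁ ⊞ T'.obj₁)⟦(1:ℤ)⟧')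
      (T'.mor₃ ≫ (biprod.inr : T'.obj₁ ⟶ T.obj₁ ⊞ T'.obj₁)⟦(1:ℤ)⟧'))

/-- The mapping cone of a morphism of triangles `φ : T₁ ⟶ T₂`: the triangle with objects
`T₁.obj₂ ⊞ T₂.obj₁`, `T₁.obj₃ ⊞ T₂.obj₂`, `T₁.obj₁⟦1⟧ ⊞ T₂.obj₃` and maps given in matrix
form by `[[-f₂, 0], [φ₂, g₁]]`, `[[-f₃, 0], [φ₃, g₂]]`, `[[-f₁⟦1⟧, 0], [φ₁⟦1⟧, g₃]]`. -/
noncomputable def triangleCone {T₁ T₂ : Triangle C} (φ : T₁ ⟶ T₂) : Triangle C :=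
  Triangle.mk
    (biprod.desc (biprod.lift (-T₁.mor₂) φ.hom₂) (biprod.lift 0 T₂.mor₁))
    (biprod.desc (biprod.lift (-T₁.mor₃) φ.hom₃) (biprod.lift 0 T₂.mor₂))
    (biprod.desc ((biprod.lift (-T₁.mor₁) φ.hom₁ : T₁.obj₁ ⟶ T₁.obj₂ ⊞ T₂.obj₁)⟦(1:ℤ)⟧')
      (T₂.mor₃ ≫ (biprod.inr : T₂.obj₁ ⟶ T₁.obj₂ ⊞ T₂.obj₁)⟦(1:ℤ)⟧'))

/-- A triangle is contractible if its identity morphism is null-homotopic. -/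
def triangleContractible (T : Triangle C) : Prop :=
  ∃ (h₁ : T.obj₂ ⟶ T.obj₁) (h₂ : T.obj₃ ⟶ T.obj₂) (h₃ : T.obj₁⟦(1:ℤ)⟧ ⟶ T.obj₃),
    𝟙 T.obj₂ = h₁ ≫ T.mor₁ + T.mor₂ ≫ h₂ ∧
    𝟙 T.obj₃ = h₂ ≫ T.mor₂ + T.mor₃ ≫ h₃ ∧
    𝟙 (T.obj₁⟦(1:ℤ)⟧) = (T.mor₁ ≫ h₁)⟦(1:ℤ)⟧' + h₃ ≫ T.mor₃

/-- If `X₁ → X₂ ⊞ Y₂ → X₃ → X₁⟦1⟧` is a distinguished triangle whose first map has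
components `f₁, g₁` and second map has components `f₂, g₂`, and `g₁ = 0`, then `g₂` is a
split monomorphism: there is `g₂' : X₃ ⟶ Y₂` with `g₂' ∘ g₂ = 𝟙 Y₂` and `g₂' ∘ f₂ = 0`. -/
theorem stmt0 {X₁ X₂ Y₂ X₃ : C} (f₁ : X₁ ⟶ X₂) (g₁ : X₁ ⟶ Y₂)
    (f₂ : X₂ ⟶ X₃) (g₂ : Y₂ ⟶ X₃) (f₃ : X₃ ⟶ X₁⟦(1:ℤ)⟧)
    (hT : Triangle.mk (biprod.lift f₁ g₁) (biprod.desc f₂ g₂) f₃ ∈ distTriang C)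
    (hg₁ : g₁ = 0) :
    ∃ g₂' : X₃ ⟶ Y₂, g₂ ≫ g₂' = 𝟙 Y₂ ∧ f₂ ≫ g₂' = 0 := by
  obtain ⟨g₂', hg₂'⟩ : ∃ g₂' : X₃ ⟶ Y₂, biprod.snd = biprod.desc f₂ g₂ ≫ g₂' := Triangle.yoneda_exact₂ _ hT (biprod.snd : X₂ ⊞ Y₂ ⟶ Y₂)
    (by rw [hg₁]; exact biprod.lift_snd _ _)
  refine ⟨g₂', ?_, ?_⟩
  · have := biprod.inr ≫= hg₂'.symm
    simpa using this
  · have := biprod.inl ≫= hg₂'.symm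
    simpa using this
end

section
/- Let X₁ → X₂ ⊕ Y₂ → X₃ → X₁⟦1⟧ be a distinguished triangle in C whose first map has components f₁ : X₁ → X₂ and g₁ : X₁ → Y₂, and whose second map has components f₂ : X₂ → X₃ and g₂ : Y₂ → X₃. If g₁ = 0 or g₂ is a split monomorphism, then there exist an object X₃' and morphisms f₂₁ : X₂ → X₃' and f₃₁ : X₃' → X₁⟦1⟧ such that (X₁, X₂, X₃'; f₁, f₂₁, f₃₁) is a distinguished triangle and the given triangle is isomorphic (as a triangle) to the direct sum of (X₁, X₂, X₃'; f₁, f₂₁, f₃₁) with the triangle (0, Y₂, Y₂; 0, 1_{Y₂}, 0). -/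
open CategoryTheory CategoryTheory.Limits CategoryTheory.Pretriangulated ZeroObject

variable {C : Type*} [Category C] [Preadditive C] [HasZeroObject C] [HasBinaryBiproducts C]
  [HasShift C ℤ] [∀ n : ℤ, (shiftFunctor C n).Additive] [Pretriangulated C]

section Aux

/-- First projection from a direct sum of triangles. -/
@[simps]
noncomputable def triangleSumFst (T T' : Triangle C) : triangleSum T T' ⟶ T where
  hom₁ := biprod.fst
  hom₂ := biprod.fst
  hom₃ := biprod.fst
  comm₁ := by simp [triangleSum, Triangle.mk]
  comm₂ := by simp [triangleSum, Triangle.mk]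
  comm₃ := by
    apply biprod.hom_ext' <;>
      simp [triangleSum, ← Functor.map_comp, Triangle.mk]

/-- Second projection from a direct sum of triangles. -/
@[simps]
noncomputable def triangleSumSnd (T T' : Triangle C) : triangleSum T T' ⟶ T' where
  hom₁ := biprod.snd
  hom₂ := biprod.snd
  hom₃ := biprod.snd
  comm₁ := by simp [triangleSum, Triangle.mk]
  comm₂ := by simp [triangleSum, Triangle.mk]
  comm₃ := by
    apply biprod.hom_ext' <;>
      simp [triangleSum, ← Functor.map_comp, Triangle.mk]

lemma triangleSum_distinguished (T T' : Triangle C) (hT : T ∈ distTriang C)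
    (hT' : T' ∈ distTriang C) : triangleSum T T' ∈ distTriang C := by
  let f : Bool → Triangle C := fun b => bif b then T else T'
  let p : ∀ b, triangleSum T T' ⟶ f b := fun b => match b with
    | false => triangleSumSnd T T'
    | true => triangleSumFst T T'
  let φ : triangleSum T T' ⟶ productTriangle f := productTriangle.lift f p
  have h1 : IsIso φ.hom₁ := by
    refine ⟨(biprod.lift (Pi.π (fun b => (f b).obj₁) true) (Pi.π (fun b => (f b).obj₁) false) :
      ∏ᶜ (fun b => (f b).obj₁) ⟶ T.obj₁ ⊞ T'.obj₁), ?_, ?_⟩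
    · apply biprod.hom_ext
      · exact (Category.assoc _ _ _).trans ((whisker_eq _ (biprod.lift_fst _ _)).trans
          ((Pi.lift_π _ _).trans (Category.id_comp _).symm))
      · exact (Category.assoc _ _ _).trans ((whisker_eq _ (biprod.lift_snd _ _)).trans
          ((Pi.lift_π _ _).trans (Category.id_comp _).symm))
    · apply limit.hom_ext
      rintro ⟨b⟩
      cases b
      · exact (Category.assoc _ _ _).trans ((whisker_eq _ (Pi.lift_π _ _)).trans
          ((biprod.lift_snd _ _).trans (Category.id_comp _).symm))
      · exact (Category.assoc _ _ _).trans ((whisker_eq _ (Pi.lift_π _ _)).trans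
          ((biprod.lift_fst _ _).trans (Category.id_comp _).symm))
  have h2 : IsIso φ.hom₂ := by
    refine ⟨(biprod.lift (Pi.π (fun b => (f b).obj₂) true) (Pi.π (fun b => (f b).obj₂) false) :
      ∏ᶜ (fun b => (f b).obj₂) ⟶ T.obj₂ ⊞ T'.obj₂), ?_, ?_⟩
    · apply biprod.hom_ext
      · exact (Category.assoc _ _ _).trans ((whisker_eq _ (biprod.lift_fst _ _)).trans
          ((Pi.lift_π _ _).trans (Category.id_comp _).symm))
      · exact (Category.assoc _ _ _).trans ((whisker_eq _ (biprod.lift_snd _ _)).trans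
          ((Pi.lift_π _ _).trans (Category.id_comp _).symm))
    · apply limit.hom_ext
      rintro ⟨b⟩
      cases b
      · exact (Category.assoc _ _ _).trans ((whisker_eq _ (Pi.lift_π _ _)).trans
          ((biprod.lift_snd _ _).trans (Category.id_comp _).symm))
      · exact (Category.assoc _ _ _).trans ((whisker_eq _ (Pi.lift_π _ _)).trans
          ((biprod.lift_fst _ _).trans (Category.id_comp _).symm))
  have h3 : IsIso φ.hom₃ := by
    refine ⟨(biprod.lift (Pi.π (fun b => (f b).obj₃) true) (Pi.π (fun b => (f b).obj₃) false) :
      ∏ᶜ (fun b => (f b).obj₃) ⟶ T.obj₃ ⊞ T'.obj₃), ?_, ?_⟩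
    · apply biprod.hom_ext
      · exact (Category.assoc _ _ _).trans ((whisker_eq _ (biprod.lift_fst _ _)).trans
          ((Pi.lift_π _ _).trans (Category.id_comp _).symm))
      · exact (Category.assoc _ _ _).trans ((whisker_eq _ (biprod.lift_snd _ _)).trans
          ((Pi.lift_π _ _).trans (Category.id_comp _).symm))
    · apply limit.hom_ext
      rintro ⟨b⟩
      cases b
      · exact (Category.assoc _ _ _).trans ((whisker_eq _ (Pi.lift_π _ _)).trans
          ((biprod.lift_snd _ _).trans (Category.id_comp _).symm))
      · exact (Category.assoc _ _ _).trans ((whisker_eq _ (Pi.lift_π _ _)).trans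
          ((biprod.lift_fst _ _).trans (Category.id_comp _).symm))
  have : IsIso φ := Triangle.isIso_of_isIsos φ h1 h2 h3
  exact isomorphic_distinguished _
    (productTriangle_distinguished f (by rintro (_|_) <;> assumption)) _ (asIso φ)

/-- The case `g₁ = 0` of the main theorem. -/
lemma stmt1_aux {X₁ X₂ Y₂ X₃ : C} (f₁ : X₁ ⟶ X₂)
    (f₂ : X₂ ⟶ X₃) (g₂ : Y₂ ⟶ X₃) (f₃ : X₃ ⟶ X₁⟦(1:ℤ)⟧)
    (hT : Triangle.mk (biprod.lift f₁ (0 : X₁ ⟶ Y₂)) (biprod.desc f₂ g₂) f₃ ∈ distTriang C) :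
    ∃ (X₃' : C) (f₂₁ : X₂ ⟶ X₃') (f₃₁ : X₃' ⟶ X₁⟦(1:ℤ)⟧),
      (Triangle.mk f₁ f₂₁ f₃₁ ∈ distTriang C) ∧
      Nonempty (Triangle.mk (biprod.lift f₁ (0 : X₁ ⟶ Y₂)) (biprod.desc f₂ g₂) f₃ ≅
        triangleSum (Triangle.mk f₁ f₂₁ f₃₁)
          (Triangle.mk (0 : (0 : C) ⟶ Y₂) (𝟙 Y₂) (0 : Y₂ ⟶ (0 : C)⟦(1:ℤ)⟧))) := by
  obtain ⟨X₃', f₂₁, f₃₁, hd⟩ := distinguished_cocone_triangle f₁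
  refine ⟨X₃', f₂₁, f₃₁, hd, ⟨?_⟩⟩
  have hS : triangleSum (Triangle.mk f₁ f₂₁ f₃₁)
      (Triangle.mk (0 : (0 : C) ⟶ Y₂) (𝟙 Y₂) (0 : Y₂ ⟶ (0 : C)⟦(1:ℤ)⟧)) ∈ distTriang C :=
    triangleSum_distinguished _ _ hd (contractible_distinguished₁ Y₂)
  refine isoTriangleOfIso₁₂ _ _ hT hS (isoBiprodZero (isZero_zero C)) (Iso.refl _) ?_
  apply biprod.hom_ext <;> simp [triangleSum, Triangle.mk]
  exact (biprod.inl_fst_assoc _).symm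

end Aux

/-- If `X₁ → X₂ ⊞ Y₂ → X₃ → X₁⟦1⟧` is a distinguished triangle whose first map has
components `f₁, g₁` and second map has components `f₂, g₂`, and `g₁ = 0` or `g₂` is a split
monomorphism, then the triangle is isomorphic to the direct sum of a distinguished triangle
`(X₁, X₂, X₃'; f₁, f₂₁, f₃₁)` and the triangle `(0, Y₂, Y₂; 0, 𝟙, 0)`. -/
theorem stmt1 {X₁ X₂ Y₂ X₃ : C} (f₁ : X₁ ⟶ X₂) (g₁ : X₁ ⟶ Y₂)
    (f₂ : X₂ ⟶ X₃) (g₂ : Y₂ ⟶ X₃) (f₃ : X₃ ⟶ X₁⟦(1:ℤ)⟧)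
    (hT : Triangle.mk (biprod.lift f₁ g₁) (biprod.desc f₂ g₂) f₃ ∈ distTriang C)
    (h : g₁ = 0 ∨ ∃ r : X₃ ⟶ Y₂, g₂ ≫ r = 𝟙 Y₂) :
    ∃ (X₃' : C) (f₂₁ : X₂ ⟶ X₃') (f₃₁ : X₃' ⟶ X₁⟦(1:ℤ)⟧),
      (Triangle.mk f₁ f₂₁ f₃₁ ∈ distTriang C) ∧
      Nonempty (Triangle.mk (biprod.lift f₁ g₁) (biprod.desc f₂ g₂) f₃ ≅
        triangleSum (Triangle.mk f₁ f₂₁ f₃₁)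
          (Triangle.mk (0 : (0 : C) ⟶ Y₂) (𝟙 Y₂) (0 : Y₂ ⟶ (0 : C)⟦(1:ℤ)⟧))) := by
  rcases h with rfl | ⟨r, hr⟩
  · exact stmt1_aux f₁ f₂ g₂ f₃ hT
  · -- reduce to the `g₁ = 0` case by a change of basis on `X₂ ⊞ Y₂`
    have hzero : biprod.lift f₁ g₁ ≫ biprod.desc f₂ g₂ = 0 :=
      comp_distTriang_mor_zero₁₂ _ hT
    have hg₁ : g₁ = -(f₁ ≫ f₂ ≫ r) := by
      have h1 : f₁ ≫ f₂ + g₁ ≫ g₂ = 0 := by simpa using hzero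
      calc g₁ = (g₁ ≫ g₂) ≫ r := by rw [Category.assoc, hr, Category.comp_id]
        _ = (-(f₁ ≫ f₂)) ≫ r := by rw [eq_neg_of_add_eq_zero_right h1]
        _ = -(f₁ ≫ f₂ ≫ r) := by simp
    let u : X₂ ⊞ Y₂ ≅ X₂ ⊞ Y₂ :=
      { hom := biprod.lift biprod.fst (biprod.snd + biprod.fst ≫ f₂ ≫ r)
        inv := biprod.lift biprod.fst (biprod.snd - biprod.fst ≫ f₂ ≫ r)
        hom_inv_id := by apply biprod.hom_ext <;> simp
        inv_hom_id := by apply biprod.hom_ext <;> simp }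
    let e : Triangle.mk (biprod.lift f₁ g₁) (biprod.desc f₂ g₂) f₃ ≅
        Triangle.mk (biprod.lift f₁ (0 : X₁ ⟶ Y₂)) (u.inv ≫ biprod.desc f₂ g₂) f₃ :=
      Triangle.isoMk _ _ (Iso.refl _) u (Iso.refl _)
        (by apply biprod.hom_ext <;> simp [u, hg₁, Triangle.mk])
        (by apply biprod.hom_ext' <;> simp [u, Triangle.mk]) (by simp [Triangle.mk])
    have hT' : Triangle.mk (biprod.lift f₁ (0 : X₁ ⟶ Y₂)) (u.inv ≫ biprod.desc f₂ g₂) f₃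
        ∈ distTriang C := isomorphic_distinguished _ hT _ e.symm
    have hdesc : u.inv ≫ biprod.desc f₂ g₂ = biprod.desc (f₂ - f₂ ≫ r ≫ g₂) g₂ := by
      apply biprod.hom_ext' <;> simp [u, sub_eq_add_neg, Preadditive.neg_comp]
    rw [hdesc] at hT'
    obtain ⟨X₃', f₂₁, f₃₁, hd, ⟨i⟩⟩ := stmt1_aux f₁ (f₂ - f₂ ≫ r ≫ g₂) g₂ f₃ hT'
    rw [← hdesc] at i
    exact ⟨X₃', f₂₁, f₃₁, hd, ⟨e ≪≫ i⟩⟩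
end

section
/- Let X₁ → X₂ ⊕ Y₂ → X₃ → X₁⟦1⟧ be a distinguished triangle in C whose first map has components f₁ : X₁ → X₂ and g₁ : X₁ → Y₂, and whose second map has components f₂ : X₂ → X₃ and g₂ : Y₂ → X₃. If g₂ = 0, then g₁ is a split epimorphism; more precisely, there exists g₁' : Y₂ → X₁ such that g₁ ∘ g₁' = 1_{Y₂} and f₁ ∘ g₁' = 0. -/
open CategoryTheory CategoryTheory.Limits CategoryTheory.Pretriangulated ZeroObject

variable {C : Type*} [Category C] [Preadditive C] [HasZeroObject C] [HasBinaryBiproducts C]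
  [HasShift C ℤ] [∀ n : ℤ, (shiftFunctor C n).Additive] [Pretriangulated C]

/-- If `X₁ → X₂ ⊞ Y₂ → X₃ → X₁⟦1⟧` is a distinguished triangle whose first map has
components `f₁, g₁` and second map has components `f₂, g₂`, and `g₂ = 0`, then `g₁` is a
split epimorphism: there is `g₁' : Y₂ ⟶ X₁` with `g₁ ∘ g₁' = 𝟙 Y₂` and `f₁ ∘ g₁' = 0`. -/
theorem stmt2 {X₁ X₂ Y₂ X₃ : C} (f₁ : X₁ ⟶ X₂) (g₁ : X₁ ⟶ Y₂)
    (f₂ : X₂ ⟶ X₃) (g₂ : Y₂ ⟶ X₃) (f₃ : X₃ ⟶ X₁⟦(1:ℤ)⟧)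
    (hT : Triangle.mk (biprod.lift f₁ g₁) (biprod.desc f₂ g₂) f₃ ∈ distTriang C)
    (hg₂ : g₂ = 0) :
    ∃ g₁' : Y₂ ⟶ X₁, g₁' ≫ g₁ = 𝟙 Y₂ ∧ g₁' ≫ f₁ = 0 := by
  obtain ⟨g₁', hg⟩ := Triangle.coyoneda_exact₂ _ hT (biprod.inr : Y₂ ⟶ X₂ ⊞ Y₂)
    (by rw [hg₂]; exact biprod.inr_desc _ _)
  refine ⟨g₁', ?_, ?_⟩
  · exact (congrArg (fun k => (g₁' : Y₂ ⟶ X₁) ≫ k) (biprod.lift_snd f₁ g₁)).symm.trans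
      ((Category.assoc _ _ _).symm.trans ((congrArg (· ≫ (biprod.snd : X₂ ⊞ Y₂ ⟶ Y₂)) hg.symm).trans
        (biprod.inr_snd)))
  · exact (congrArg (fun k => (g₁' : Y₂ ⟶ X₁) ≫ k) (biprod.lift_fst f₁ g₁)).symm.trans
      ((Category.assoc _ _ _).symm.trans ((congrArg (· ≫ (biprod.fst : X₂ ⊞ Y₂ ⟶ X₂)) hg.symm).trans
        (biprod.inr_fst)))
end

section
/- Let X, Y, Z be distinguished triangles in C and let φ = (φ₁, φ₂, φ₃) : X → Y and ψ = (ψ₁, ψ₂, ψ₃) : Y → Z be morphisms of triangles. Then the triple of diagonal maps (φ₂ ⊕ 1_{Z₁}, φ₃ ⊕ 1_{Z₂}, φ₁⟦1⟧ ⊕ 1_{Z₃}) defines a morphism of triangles from the mapping cone C(ψ ∘ φ) to the mapping cone C(ψ). -/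
open CategoryTheory CategoryTheory.Limits CategoryTheory.Pretriangulated ZeroObject

variable {C : Type*} [Category C] [Preadditive C] [HasZeroObject C] [HasBinaryBiproducts C]
  [HasShift C ℤ] [∀ n : ℤ, (shiftFunctor C n).Additive] [Pretriangulated C]

/-- Given morphisms of distinguished triangles `φ : T₁ ⟶ T₂` and `ψ : T₂ ⟶ T₃`, the triple
of diagonal maps `(φ₂ ⊞ 𝟙, φ₃ ⊞ 𝟙, φ₁⟦1⟧ ⊞ 𝟙)` defines a morphism of triangles from the
mapping cone of `ψ ∘ φ` to the mapping cone of `ψ`. -/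
theorem stmt4 {T₁ T₂ T₃ : Triangle C} (hT₁ : T₁ ∈ distTriang C) (hT₂ : T₂ ∈ distTriang C)
    (hT₃ : T₃ ∈ distTriang C) (φ : T₁ ⟶ T₂) (ψ : T₂ ⟶ T₃) :
    ∃ m : triangleCone (φ ≫ ψ) ⟶ triangleCone ψ,
      m.hom₁ = biprod.map φ.hom₂ (𝟙 T₃.obj₁) ∧
      m.hom₂ = biprod.map φ.hom₃ (𝟙 T₃.obj₂) ∧
      m.hom₃ = biprod.map (φ.hom₁⟦(1:ℤ)⟧') (𝟙 T₃.obj₃) := by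
  refine ⟨Triangle.homMk _ _ (biprod.map φ.hom₂ (𝟙 T₃.obj₁)) (biprod.map φ.hom₃ (𝟙 T₃.obj₂))
    (biprod.map (φ.hom₁⟦(1:ℤ)⟧') (𝟙 T₃.obj₃)) ?_ ?_ ?_, rfl, rfl, rfl⟩
  · dsimp [triangleCone, Triangle.mk]; ext <;> simp [φ.comm₂]
  · dsimp [triangleCone, Triangle.mk]; ext <;> simp [φ.comm₃]
  · dsimp [triangleCone, Triangle.mk]; ext <;> simp [← Functor.map_comp, φ.comm₁] <;> congr 1 <;> ext <;> simp [φ.comm₁]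
end

section
/- Let X, Y, Z be distinguished triangles in C and let φ = (φ₁, φ₂, φ₃) : X → Y and ψ = (ψ₁, ψ₂, ψ₃) : Y → Z be morphisms of triangles. If each φᵢ is an isomorphism, then the morphism (φ₂ ⊕ 1_{Z₁}, φ₃ ⊕ 1_{Z₂}, φ₁⟦1⟧ ⊕ 1_{Z₃}) from the mapping cone C(ψ ∘ φ) to the mapping cone C(ψ) is an isomorphism of triangles; in particular C(ψ ∘ φ) ≅ C(ψ). -/
open CategoryTheory CategoryTheory.Limits CategoryTheory.Pretriangulated ZeroObject

variable {C : Type*} [Category C] [Preadditive C] [HasZeroObject C] [HasBinaryBiproducts C]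
  [HasShift C ℤ] [∀ n : ℤ, (shiftFunctor C n).Additive] [Pretriangulated C]

/-- Given morphisms of distinguished triangles `φ : T₁ ⟶ T₂` and `ψ : T₂ ⟶ T₃` such that all
components of `φ` are isomorphisms, the morphism `(φ₂ ⊞ 𝟙, φ₃ ⊞ 𝟙, φ₁⟦1⟧ ⊞ 𝟙)` from the
mapping cone of `ψ ∘ φ` to the mapping cone of `ψ` is an isomorphism of triangles. -/
theorem stmt5 {T₁ T₂ T₃ : Triangle C} (hT₁ : T₁ ∈ distTriang C) (hT₂ : T₂ ∈ distTriang C)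
    (hT₃ : T₃ ∈ distTriang C) (φ : T₁ ⟶ T₂) (ψ : T₂ ⟶ T₃)
    (h₁ : IsIso φ.hom₁) (h₂ : IsIso φ.hom₂) (h₃ : IsIso φ.hom₃) :
    ∃ e : triangleCone (φ ≫ ψ) ≅ triangleCone ψ,
      e.hom.hom₁ = biprod.map φ.hom₂ (𝟙 T₃.obj₁) ∧
      e.hom.hom₂ = biprod.map φ.hom₃ (𝟙 T₃.obj₂) ∧
      e.hom.hom₃ = biprod.map (φ.hom₁⟦(1:ℤ)⟧') (𝟙 T₃.obj₃) := by
  refine ⟨Triangle.isoMk _ _ (biprod.mapIso (asIso φ.hom₂) (Iso.refl _))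
    (biprod.mapIso (asIso φ.hom₃) (Iso.refl _))
    (biprod.mapIso (asIso (φ.hom₁⟦(1:ℤ)⟧')) (Iso.refl _)) ?_ ?_ ?_, rfl, rfl, rfl⟩
  · dsimp [triangleCone, Triangle.mk]
    ext
    all_goals simp [φ.comm₂, φ.comm₁]
  · dsimp [triangleCone, Triangle.mk]
    ext
    all_goals simp [φ.comm₃, φ.comm₂]
  · dsimp [triangleCone, Triangle.mk, biprod.mapIso, TriangleMorphism.comp]
    ext
    · rw [biprod.inl_map_assoc, biprod.inl_desc, ← Functor.map_comp]
      have key : biprod.lift (-T₁.mor₁) (φ.hom₁ ≫ ψ.hom₁) ≫ biprod.map φ.hom₂ (𝟙 T₃.obj₁)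
          = φ.hom₁ ≫ biprod.lift (-T₂.mor₁) ψ.hom₁ := by ext <;> simp [φ.comm₁]
      rw [biprod.inl_desc_assoc, ← Functor.map_comp, key]
    · simp [← Functor.map_comp]
end

section
/- Let X, Y, Z be distinguished triangles in C and let φ = (φ₁, φ₂, φ₃) : X → Y and ψ = (ψ₁, ψ₂, ψ₃) : Y → Z be morphisms of triangles. If φ is a weak isomorphism, i.e. two cyclically consecutive components of φ are isomorphisms (φ₁ and φ₂ are isomorphisms, or φ₂ and φ₃ are isomorphisms, or φ₃ and φ₁ are isomorphisms), then the mapping cone C(ψ ∘ φ) is a distinguished triangle if and only if the mapping cone C(ψ) is a distinguished triangle. -/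
open CategoryTheory CategoryTheory.Limits CategoryTheory.Pretriangulated ZeroObject

variable {C : Type*} [Category C] [Preadditive C] [HasZeroObject C] [HasBinaryBiproducts C]
  [HasShift C ℤ] [∀ n : ℤ, (shiftFunctor C n).Additive] [Pretriangulated C]

/-- Given morphisms of distinguished triangles `φ : T₁ ⟶ T₂` and `ψ : T₂ ⟶ T₃`, if `φ` is a
weak isomorphism (two cyclically consecutive components of `φ` are isomorphisms), then the
mapping cone of `ψ ∘ φ` is distinguished iff the mapping cone of `ψ` is distinguished. -/
theorem stmt6 {T₁ T₂ T₃ : Triangle C} (hT₁ : T₁ ∈ distTriang C) (hT₂ : T₂ ∈ distTriang C)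
    (hT₃ : T₃ ∈ distTriang C) (φ : T₁ ⟶ T₂) (ψ : T₂ ⟶ T₃)
    (hweak : (IsIso φ.hom₁ ∧ IsIso φ.hom₂) ∨ (IsIso φ.hom₂ ∧ IsIso φ.hom₃) ∨
      (IsIso φ.hom₃ ∧ IsIso φ.hom₁)) :
    (triangleCone (φ ≫ ψ) ∈ distTriang C) ↔ triangleCone ψ ∈ distTriang C := by
  have h1 : IsIso φ.hom₁ := by
    rcases hweak with ⟨h, h'⟩ | ⟨h, h'⟩ | ⟨h, h'⟩
    · exact h
    · exact isIso₁_of_isIso₂₃ φ hT₁ hT₂ h h'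
    · exact h'
  have h2 : IsIso φ.hom₂ := by
    rcases hweak with ⟨h, h'⟩ | ⟨h, h'⟩ | ⟨h, h'⟩
    · exact h'
    · exact h
    · exact isIso₂_of_isIso₁₃ φ hT₁ hT₂ h' h
  have h3 : IsIso φ.hom₃ := by
    rcases hweak with ⟨h, h'⟩ | ⟨h, h'⟩ | ⟨h, h'⟩
    · exact isIso₃_of_isIso₁₂ φ hT₁ hT₂ h h'
    · exact h'
    · exact h
  let e : triangleCone (φ ≫ ψ) ≅ triangleCone ψ :=
    Triangle.isoMk _ _
      (biprod.mapIso (asIso φ.hom₂) (Iso.refl _))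
      (biprod.mapIso (asIso φ.hom₃) (Iso.refl _))
      (biprod.mapIso ((shiftFunctor C (1:ℤ)).mapIso (asIso φ.hom₁)) (Iso.refl _))
      (by
        dsimp [triangleCone, Triangle.mk]
        ext
        · simp [φ.comm₂]
        · simp
        · simp
        · simp)
      (by
        dsimp [triangleCone, Triangle.mk]
        ext
        · simp [φ.comm₃]
        · simp
        · simp
        · simp)
      (by
        dsimp [triangleCone, Triangle.mk, biprod.mapIso]
        ext
        · simp only [biprod.inl_desc_assoc, biprod.inl_map_assoc, Category.assoc,
            biprod.inl_desc, ← Functor.map_comp]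
          congr 1
          ext <;> simp [φ.comm₁]
        · simp [← Functor.map_comp])
  exact ⟨fun h => isomorphic_distinguished _ h _ e.symm,
    fun h => isomorphic_distinguished _ h _ e⟩
end

section
/- Let T be a distinguished triangle in C of the form X₁ ⊕ Y₁ → X₂ ⊕ Y₂ → X₃ ⊕ Y₃ → X₁⟦1⟧ ⊕ Y₁⟦1⟧ whose three maps are lower triangular in matrix form: [[f₁, 0], [φ₁, g₁]], [[f₂, 0], [φ₂, g₂]], [[f₃, 0], [φ₃, g₃]], so that X = (X₁, X₂, X₃; f₁, f₂, f₃) and Y = (Y₁, Y₂, Y₃; g₁, g₂, g₃) are triangles. If X is contractible or Y is contractible, then T is isomorphic (as a triangle) to the direct sum X ⊕ Y (the triangle with the same objects and block-diagonal maps diag(f₁, g₁), diag(f₂, g₂), diag(f₃, g₃)). -/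
open CategoryTheory CategoryTheory.Limits CategoryTheory.Pretriangulated ZeroObject

variable {C : Type*} [Category C] [Preadditive C] [HasZeroObject C] [HasBinaryBiproducts C]
  [HasShift C ℤ] [∀ n : ℤ, (shiftFunctor C n).Additive] [Pretriangulated C]

/-- Shear isomorphism on a biproduct. -/
noncomputable def shearIso {X Y : C} (α : X ⟶ Y) : X ⊞ Y ≅ X ⊞ Y where
  hom := 𝟙 _ + biprod.fst ≫ α ≫ biprod.inr
  inv := 𝟙 _ - biprod.fst ≫ α ≫ biprod.inr
  hom_inv_id := by
    simp [Preadditive.comp_sub, Preadditive.add_comp, Preadditive.comp_add,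
      Preadditive.sub_comp]
  inv_hom_id := by
    simp [Preadditive.comp_sub, Preadditive.add_comp, Preadditive.comp_add,
      Preadditive.sub_comp]

lemma key {X₁ X₂ X₃ Y₁ Y₂ Y₃ : C}
    (f₁ : X₁ ⟶ X₂) (f₂ : X₂ ⟶ X₃) (f₃ : X₃ ⟶ X₁⟦(1:ℤ)⟧)
    (g₁ : Y₁ ⟶ Y₂) (g₂ : Y₂ ⟶ Y₃) (g₃ : Y₃ ⟶ Y₁⟦(1:ℤ)⟧)
    (φ₁ : X₁ ⟶ Y₂) (φ₂ : X₂ ⟶ Y₃) (φ₃ : X₃ ⟶ Y₁⟦(1:ℤ)⟧)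
    (α₁ : X₁ ⟶ Y₁) (α₂ : X₂ ⟶ Y₂) (α₃ : X₃ ⟶ Y₃)
    (e1 : φ₁ = α₁ ≫ g₁ - f₁ ≫ α₂)
    (e2 : φ₂ = α₂ ≫ g₂ - f₂ ≫ α₃)
    (e3 : φ₃ = α₃ ≫ g₃ - f₃ ≫ α₁⟦(1:ℤ)⟧') :
    Nonempty (Triangle.mk
        (biprod.desc (biprod.lift f₁ φ₁) (biprod.lift 0 g₁))
        (biprod.desc (biprod.lift f₂ φ₂) (biprod.lift 0 g₂))
        (biprod.desc
          (f₃ ≫ (biprod.inl : X₁ ⟶ X₁ ⊞ Y₁)⟦(1:ℤ)⟧' + φ₃ ≫ (biprod.inr : Y₁ ⟶ X₁ ⊞ Y₁)⟦(1:ℤ)⟧')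
          (g₃ ≫ (biprod.inr : Y₁ ⟶ X₁ ⊞ Y₁)⟦(1:ℤ)⟧')) ≅
      triangleSum (Triangle.mk f₁ f₂ f₃) (Triangle.mk g₁ g₂ g₃)) := by
  refine ⟨Triangle.isoMk _ _ (shearIso α₁) (shearIso α₂) (shearIso α₃) ?_ ?_ ?_⟩
  · subst e1
    dsimp [triangleSum]
    change biprod.desc (biprod.lift f₁ (α₁ ≫ g₁ - f₁ ≫ α₂)) (biprod.lift 0 g₁) ≫
      (shearIso α₂).hom = (shearIso α₁).hom ≫ biprod.map f₁ g₁
    ext <;> simp [shearIso] <;> abel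
  · subst e2
    dsimp [triangleSum]
    change biprod.desc (biprod.lift f₂ (α₂ ≫ g₂ - f₂ ≫ α₃)) (biprod.lift 0 g₂) ≫
      (shearIso α₃).hom = (shearIso α₂).hom ≫ biprod.map f₂ g₂
    ext <;> simp [shearIso] <;> abel
  · subst e3
    dsimp [triangleSum]
    change biprod.desc (f₃ ≫ (biprod.inl : X₁ ⟶ X₁ ⊞ Y₁)⟦(1:ℤ)⟧' +
        (α₃ ≫ g₃ - f₃ ≫ α₁⟦(1:ℤ)⟧') ≫ (biprod.inr : Y₁ ⟶ X₁ ⊞ Y₁)⟦(1:ℤ)⟧')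
        (g₃ ≫ (biprod.inr : Y₁ ⟶ X₁ ⊞ Y₁)⟦(1:ℤ)⟧') ≫ (shearIso α₁).hom⟦(1:ℤ)⟧' =
      (shearIso α₃).hom ≫ biprod.desc (f₃ ≫ (biprod.inl : X₁ ⟶ X₁ ⊞ Y₁)⟦(1:ℤ)⟧')
        (g₃ ≫ (biprod.inr : Y₁ ⟶ X₁ ⊞ Y₁)⟦(1:ℤ)⟧')
    ext
    · simp only [shearIso, triangleSum, Triangle.mk_obj₁, Triangle.mk_obj₂, Triangle.mk_obj₃,
        Triangle.mk_mor₁, Triangle.mk_mor₂, Triangle.mk_mor₃, biprod.inl_desc_assoc,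
        Preadditive.add_comp, Preadditive.comp_add, Category.assoc, Functor.map_add,
        Functor.map_comp, Category.comp_id]
      simp [← Functor.map_comp, Preadditive.sub_comp, Preadditive.comp_sub]
      abel
    · simp only [shearIso, triangleSum, Triangle.mk_obj₁, Triangle.mk_obj₂, Triangle.mk_obj₃,
        Triangle.mk_mor₁, Triangle.mk_mor₂, Triangle.mk_mor₃, biprod.inr_desc_assoc,
        Preadditive.add_comp, Preadditive.comp_add, Category.assoc, Functor.map_add,
        Functor.map_comp, Category.comp_id]
      simp [← Functor.map_comp]

/-- If `T` is a distinguished triangle on the biproducts `Xᵢ ⊞ Yᵢ` whose maps are lower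
triangular with diagonal entries the maps of triangles `X = (X₁,X₂,X₃;f₁,f₂,f₃)` and
`Y = (Y₁,Y₂,Y₃;g₁,g₂,g₃)`, and `X` or `Y` is contractible, then `T` is isomorphic to the
direct sum `X ⊕ Y`. -/
theorem stmt7 {X₁ X₂ X₃ Y₁ Y₂ Y₃ : C}
    (f₁ : X₁ ⟶ X₂) (f₂ : X₂ ⟶ X₃) (f₃ : X₃ ⟶ X₁⟦(1:ℤ)⟧)
    (g₁ : Y₁ ⟶ Y₂) (g₂ : Y₂ ⟶ Y₃) (g₃ : Y₃ ⟶ Y₁⟦(1:ℤ)⟧)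
    (φ₁ : X₁ ⟶ Y₂) (φ₂ : X₂ ⟶ Y₃) (φ₃ : X₃ ⟶ Y₁⟦(1:ℤ)⟧)
    (hT : Triangle.mk
        (biprod.desc (biprod.lift f₁ φ₁) (biprod.lift 0 g₁))
        (biprod.desc (biprod.lift f₂ φ₂) (biprod.lift 0 g₂))
        (biprod.desc
          (f₃ ≫ (biprod.inl : X₁ ⟶ X₁ ⊞ Y₁)⟦(1:ℤ)⟧' + φ₃ ≫ (biprod.inr : Y₁ ⟶ X₁ ⊞ Y₁)⟦(1:ℤ)⟧')
          (g₃ ≫ (biprod.inr : Y₁ ⟶ X₁ ⊞ Y₁)⟦(1:ℤ)⟧')) ∈ distTriang C)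
    (hcontr : triangleContractible (Triangle.mk f₁ f₂ f₃) ∨
      triangleContractible (Triangle.mk g₁ g₂ g₃)) :
    Nonempty (Triangle.mk
        (biprod.desc (biprod.lift f₁ φ₁) (biprod.lift 0 g₁))
        (biprod.desc (biprod.lift f₂ φ₂) (biprod.lift 0 g₂))
        (biprod.desc
          (f₃ ≫ (biprod.inl : X₁ ⟶ X₁ ⊞ Y₁)⟦(1:ℤ)⟧' + φ₃ ≫ (biprod.inr : Y₁ ⟶ X₁ ⊞ Y₁)⟦(1:ℤ)⟧')
          (g₃ ≫ (biprod.inr : Y₁ ⟶ X₁ ⊞ Y₁)⟦(1:ℤ)⟧')) ≅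
      triangleSum (Triangle.mk f₁ f₂ f₃) (Triangle.mk g₁ g₂ g₃)) := by
  have h12 : biprod.desc (biprod.lift f₁ φ₁) (biprod.lift 0 g₁) ≫
      biprod.desc (biprod.lift f₂ φ₂) (biprod.lift 0 g₂) = 0 :=
    comp_distTriang_mor_zero₁₂ _ hT
  have h23 : biprod.desc (biprod.lift f₂ φ₂) (biprod.lift 0 g₂) ≫
      biprod.desc
        (f₃ ≫ (biprod.inl : X₁ ⟶ X₁ ⊞ Y₁)⟦(1:ℤ)⟧' + φ₃ ≫ (biprod.inr : Y₁ ⟶ X₁ ⊞ Y₁)⟦(1:ℤ)⟧')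
        (g₃ ≫ (biprod.inr : Y₁ ⟶ X₁ ⊞ Y₁)⟦(1:ℤ)⟧') = 0 :=
    comp_distTriang_mor_zero₂₃ _ hT
  have h31 : biprod.desc
        (f₃ ≫ (biprod.inl : X₁ ⟶ X₁ ⊞ Y₁)⟦(1:ℤ)⟧' + φ₃ ≫ (biprod.inr : Y₁ ⟶ X₁ ⊞ Y₁)⟦(1:ℤ)⟧')
        (g₃ ≫ (biprod.inr : Y₁ ⟶ X₁ ⊞ Y₁)⟦(1:ℤ)⟧') ≫
      (biprod.desc (biprod.lift f₁ φ₁) (biprod.lift 0 g₁))⟦(1:ℤ)⟧' = 0 :=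
    comp_distTriang_mor_zero₃₁ _ hT
  have rel1 : f₁ ≫ φ₂ + φ₁ ≫ g₂ = 0 := by
    have := (biprod.inl ≫= h12) =≫ biprod.snd
    simpa using this
  have rel2 : f₂ ≫ φ₃ + φ₂ ≫ g₃ = 0 := by
    have := (biprod.inl ≫= h23) =≫ (biprod.snd : X₁ ⊞ Y₁ ⟶ Y₁)⟦(1:ℤ)⟧'
    simpa [← Functor.map_comp] using this
  have rel3 : f₃ ≫ φ₁⟦(1:ℤ)⟧' + φ₃ ≫ g₁⟦(1:ℤ)⟧' = 0 := by
    have := (biprod.inl ≫= h31) =≫ (biprod.snd : X₂ ⊞ Y₂ ⟶ Y₂)⟦(1:ℤ)⟧'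
    simpa [← Functor.map_comp] using this
  obtain ⟨h₁, h₂, h₃, hA, hB, hC⟩ | ⟨k₁, k₂, k₃, hA, hB, hC⟩ :
      (∃ (h₁ : X₂ ⟶ X₁) (h₂ : X₃ ⟶ X₂) (h₃ : X₁⟦(1:ℤ)⟧ ⟶ X₃),
        𝟙 X₂ = h₁ ≫ f₁ + f₂ ≫ h₂ ∧ 𝟙 X₃ = h₂ ≫ f₂ + f₃ ≫ h₃ ∧
        𝟙 (X₁⟦(1:ℤ)⟧) = (f₁ ≫ h₁)⟦(1:ℤ)⟧' + h₃ ≫ f₃) ∨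
      (∃ (k₁ : Y₂ ⟶ Y₁) (k₂ : Y₃ ⟶ Y₂) (k₃ : Y₁⟦(1:ℤ)⟧ ⟶ Y₃),
        𝟙 Y₂ = k₁ ≫ g₁ + g₂ ≫ k₂ ∧ 𝟙 Y₃ = k₂ ≫ g₂ + g₃ ≫ k₃ ∧
        𝟙 (Y₁⟦(1:ℤ)⟧) = (g₁ ≫ k₁)⟦(1:ℤ)⟧' + k₃ ≫ g₃) := hcontr
  · refine key f₁ f₂ f₃ g₁ g₂ g₃ φ₁ φ₂ φ₃
      ((shiftFunctor C (1:ℤ)).preimage (-(h₃ ≫ φ₃))) (-(h₁ ≫ φ₁)) (-(h₂ ≫ φ₂)) ?_ ?_ ?_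
    · apply (shiftFunctor C (1:ℤ)).map_injective
      have hφ : φ₃ ≫ g₁⟦(1:ℤ)⟧' = -(f₃ ≫ φ₁⟦(1:ℤ)⟧') := by
        rw [eq_neg_iff_add_eq_zero]
        simpa [add_comm] using rel3
      have hid := congrArg (fun t => t ≫ φ₁⟦(1:ℤ)⟧') hC
      simp only [Category.id_comp, Preadditive.add_comp, Category.assoc,
        Functor.map_comp] at hid
      simp only [Functor.map_sub, Functor.map_add, Functor.map_comp, Functor.map_preimage,
        Functor.map_neg, Preadditive.neg_comp, Category.assoc, hφ, Preadditive.comp_neg,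
        neg_neg, sub_neg_eq_add]
      conv_lhs => rw [hid]
      abel
    · have hφ : φ₁ ≫ g₂ = -(f₁ ≫ φ₂) := by
        rw [eq_neg_iff_add_eq_zero]
        simpa [add_comm] using rel1
      have hid := congrArg (fun t => t ≫ φ₂) hA
      simp only [Category.id_comp, Preadditive.add_comp, Category.assoc] at hid
      simp only [Preadditive.neg_comp, Category.assoc, hφ, Preadditive.comp_neg, neg_neg,
        sub_neg_eq_add]
      conv_lhs => rw [hid]
    · have hφ : φ₂ ≫ g₃ = -(f₂ ≫ φ₃) := by
        rw [eq_neg_iff_add_eq_zero]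
        simpa [add_comm] using rel2
      have hid := congrArg (fun t => t ≫ φ₃) hB
      simp only [Category.id_comp, Preadditive.add_comp, Category.assoc] at hid
      simp only [Functor.map_preimage, Preadditive.neg_comp, Category.assoc, hφ,
        Preadditive.comp_neg, neg_neg, sub_neg_eq_add]
      conv_lhs => rw [hid]
  · refine key f₁ f₂ f₃ g₁ g₂ g₃ φ₁ φ₂ φ₃ (φ₁ ≫ k₁) (φ₂ ≫ k₂) (φ₃ ≫ k₃) ?_ ?_ ?_
    · have hφ : f₁ ≫ φ₂ = -(φ₁ ≫ g₂) := by
        rw [eq_neg_iff_add_eq_zero]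
        exact rel1
      have hid := congrArg (fun t => φ₁ ≫ t) hA
      simp only [Category.comp_id, Preadditive.comp_add, ← Category.assoc] at hid
      simp only [Category.assoc] at hid
      rw [Category.assoc, ← Category.assoc f₁ φ₂ k₂, hφ, Preadditive.neg_comp,
        Category.assoc, sub_neg_eq_add]
      conv_lhs => rw [hid]
    · have hφ : f₂ ≫ φ₃ = -(φ₂ ≫ g₃) := by
        rw [eq_neg_iff_add_eq_zero]
        exact rel2
      have hid := congrArg (fun t => φ₂ ≫ t) hB
      simp only [Category.comp_id, Preadditive.comp_add, ← Category.assoc] at hid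
      simp only [Category.assoc] at hid
      rw [Category.assoc, ← Category.assoc f₂ φ₃ k₃, hφ, Preadditive.neg_comp,
        Category.assoc, sub_neg_eq_add]
      conv_lhs => rw [hid]
    · have hφ : f₃ ≫ φ₁⟦(1:ℤ)⟧' = -(φ₃ ≫ g₁⟦(1:ℤ)⟧') := by
        rw [eq_neg_iff_add_eq_zero]
        exact rel3
      have hid := congrArg (fun t => φ₃ ≫ t) hC
      simp only [Category.comp_id, Preadditive.comp_add, Functor.map_comp,
        ← Category.assoc] at hid
      simp only [Category.assoc] at hid
      rw [Category.assoc, Functor.map_comp, ← Category.assoc f₃ _ _, hφ,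
        Preadditive.neg_comp, Category.assoc, sub_neg_eq_add]
      conv_lhs => rw [hid]
      abel
end
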